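/- Commutativity of the convolution on the cone X_q: Let q ≥ 1 be an integer and p > 2q−1 real. Then for all x, x' ∈ X_q and every continuous function f : X_q → ℂ, (δ_x *_p δ_{x'})(f) = (δ_{x'} *_p δ_x)(f). -/

import Mathlib

noncomputable section
open MeasureTheory Matrix
open scoped ComplexOrder

instance matMS (ι : Type*) : MeasurableSpace (Matrix ι ι ℂ) :=
  (inferInstance : MeasurableSpace (ι → ι → ℂ))

/-- Lebesgue measure on `M_q(ℂ) ≅ ℝ^{2q²}` -/
def lebM (q : ℕ) : Measure (Matrix (Fin q) (Fin q) ℂ) :=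
  (volume : Measure (Fin q → Fin q → ℂ)).map Matrix.of

/-- the closed matrix ball `B_q` -/
def Bq (q : ℕ) : Set (Matrix (Fin q) (Fin q) ℂ) :=
  {w | (1 - wᴴ * w).PosSemidef}

/-- `μ` is the normalized Haar measure of the compact group given by the set `G`. -/
structure IsHaarProb {ι : Type*} [Fintype ι] (G : Set (Matrix ι ι ℂ))
    (μ : Measure (Matrix ι ι ℂ)) : Prop where
  prob : IsProbabilityMeasure μ
  conc : μ G = 1
  invar : ∀ k ∈ G, μ.map (fun x => k * x) = μ

/-- argument with `arg 0 = 1` -/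
def carg (w : ℂ) : ℂ := if w = 0 then 1 else w / ‖w‖

/-- increasingly ordered singular values -/
def sigUp {q : ℕ} (X : Matrix (Fin q) (Fin q) ℂ) : Fin q → ℝ :=
  fun j => Real.sqrt
    (((Matrix.isHermitian_conjTranspose_mul_self X).eigenvalues ∘
      Tuple.sort (Matrix.isHermitian_conjTranspose_mul_self X).eigenvalues) j)

/-- the cone `X_q`, realized in `ℂ × ℝ^q` as the set of points
`[r, z] = (z r₁, r)` with `0 ≤ r₁ ≤ … ≤ r_q ≤ 1` and `z ∈ 𝕋`. -/
def XqSet (q : ℕ) : Set (ℂ × (Fin q → ℝ)) :=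
  {x | Monotone x.2 ∧ (∀ j, x.2 j ∈ Set.Icc (0:ℝ) 1) ∧
    ∀ h : 0 < q, ‖x.1‖ = x.2 ⟨0, h⟩}

/-- `cos t̲` written in terms of `r = cos t`. -/
def cMatr (q : ℕ) (r : Fin q → ℝ) : Matrix (Fin q) (Fin q) ℂ :=
  Matrix.diagonal fun j => (r j : ℂ)

/-- `sin t̲` written in terms of `r = cos t`, i.e. `sin t_j = √(1 − r_j²)`. -/
def sMatr (q : ℕ) (r : Fin q → ℝ) : Matrix (Fin q) (Fin q) ℂ :=
  Matrix.diagonal fun j => (Real.sqrt (1 - r j ^ 2) : ℂ)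

/-- `d(t,t';v,w) = − sin t̲ · w · sin t̲' + cos t̲ · v · cos t̲'` for `r = cos t`,
`r' = cos t'`. -/
def dMr (q : ℕ) (r r' : Fin q → ℝ) (v w : Matrix (Fin q) (Fin q) ℂ) :
    Matrix (Fin q) (Fin q) ℂ :=
  -(sMatr q r) * w * sMatr q r' + cMatr q r * v * cMatr q r'

/-- the point `[σ↑(d), z z' · arg det d] ∈ X_q` appearing in the convolution,
for `x = [r, z]`, `x' = [r', z']`. -/
def convPt (q : ℕ) (hq : 0 < q) (v w : Matrix (Fin q) (Fin q) ℂ)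
    (x x' : ℂ × (Fin q → ℝ)) : ℂ × (Fin q → ℝ) :=
  (carg x.1 * carg x'.1 * carg (dMr q x.2 x'.2 v w).det *
      (sigUp (dMr q x.2 x'.2 v w) ⟨0, hq⟩ : ℝ),
    sigUp (dMr q x.2 x'.2 v w))

/-- `κ_p = ∫_{B_q} det(1 − w*w)^{p−2q} dw` -/
def kapR (q : ℕ) (p : ℝ) : ℝ :=
  ∫ w in Bq q, ((1 - wᴴ * w).det.re) ^ (p - 2 * q) ∂lebM q

/-- the hypergroup convolution `(δ_x *_p δ_{x'})(f)` on `X_q`, where `ν` is the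
normalized Haar measure of `SU(q)`. -/
def convXq (q : ℕ) (hq : 0 < q) (p : ℝ)
    (ν : Measure (Matrix (Fin q) (Fin q) ℂ))
    (f : ℂ × (Fin q → ℝ) → ℂ) (x x' : ℂ × (Fin q → ℝ)) : ℂ :=
  ((kapR q p : ℝ) : ℂ)⁻¹ *
    ∫ w in Bq q, (∫ v, f (convPt q hq v w x x') ∂ν) *
      ((((1 - wᴴ * w).det.re) ^ (p - 2 * q) : ℝ) : ℂ) ∂lebM q

namespace ConvCommAux

open Polynomial

instance matBorel (q : ℕ) : BorelSpace (Matrix (Fin q) (Fin q) ℂ) :=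
  ⟨(inferInstance : BorelSpace (Fin q → Fin q → ℂ)).measurable_eq⟩

/-- transpose as a measurable equivalence -/
def tME (q : ℕ) : Matrix (Fin q) (Fin q) ℂ ≃ᵐ Matrix (Fin q) (Fin q) ℂ where
  toFun m := mᵀ
  invFun m := mᵀ
  left_inv m := Matrix.transpose_transpose m
  right_inv m := Matrix.transpose_transpose m
  measurable_toFun := measurable_pi_lambda _ fun i => measurable_pi_lambda _ fun j =>
    (measurable_pi_apply i).comp (measurable_pi_apply j)
  measurable_invFun := measurable_pi_lambda _ fun i => measurable_pi_lambda _ fun j =>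
    (measurable_pi_apply i).comp (measurable_pi_apply j)

/-- curry as a measurable equivalence -/
def curryME (q : ℕ) : (Fin q × Fin q → ℂ) ≃ᵐ (Fin q → Fin q → ℂ) where
  toEquiv := Equiv.curry (Fin q) (Fin q) ℂ
  measurable_toFun := measurable_pi_lambda _ fun i => measurable_pi_lambda _ fun j =>
    measurable_pi_apply (i, j)
  measurable_invFun := measurable_pi_lambda _ fun p =>
    (measurable_pi_apply p.2).comp (measurable_pi_apply p.1)

lemma mp_curry_symm (q : ℕ) : MeasurePreserving (curryME q).symm volume volume := by
  constructor
  · exact (curryME q).symm.measurable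
  · have h : (volume : Measure (Fin q → Fin q → ℂ)).map (curryME q).symm
        = Measure.pi fun _ : Fin q × Fin q => (volume : Measure ℂ) := by
      symm
      apply Measure.pi_eq
      intro s hs
      rw [Measure.map_apply (curryME q).symm.measurable (MeasurableSet.univ_pi hs)]
      have hpre : (curryME q).symm ⁻¹' (Set.univ.pi s)
          = Set.univ.pi fun i => Set.univ.pi fun j => s (i, j) := by
        ext m
        simp only [Set.mem_preimage, Set.mem_univ_pi]
        constructor
        · intro h i j; exact h (i, j)
        · intro h p; exact h p.1 p.2
      rw [hpre]
      rw [volume_pi_pi]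
      rw [Fintype.prod_prod_type]
      exact Finset.prod_congr rfl fun i _ => volume_pi_pi _
    rw [h, ← volume_pi]

lemma mp_curry (q : ℕ) : MeasurePreserving (curryME q) volume volume := by
  have h := (mp_curry_symm q).symm (curryME q).symm
  simpa using h

lemma mp_flip (q : ℕ) :
    MeasurePreserving (fun m : Fin q → Fin q → ℂ => fun i j => m j i) volume volume := by
  have h2 := MeasureTheory.volume_measurePreserving_piCongrLeft
    (fun _ : Fin q × Fin q => ℂ) (Equiv.prodComm (Fin q) (Fin q))
  have hcomp := (mp_curry q).comp (h2.comp (mp_curry_symm q))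
  have hfun : (⇑(curryME q) ∘ ⇑(MeasurableEquiv.piCongrLeft (fun _ : Fin q × Fin q => ℂ)
        (Equiv.prodComm (Fin q) (Fin q))) ∘ ⇑(curryME q).symm)
      = fun m : Fin q → Fin q → ℂ => fun i j => m j i := by
    funext m i j
    have := MeasurableEquiv.piCongrLeft_apply_apply (Equiv.prodComm (Fin q) (Fin q))
      (β := fun _ : Fin q × Fin q => ℂ) ((curryME q).symm m) (j, i)
    exact this
  rwa [hfun] at hcomp

lemma measurable_of' (q : ℕ) :
    Measurable (⇑(Matrix.of) : (Fin q → Fin q → ℂ) → Matrix (Fin q) (Fin q) ℂ) :=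
  measurable_id

lemma lebM_map_transpose (q : ℕ) : (lebM q).map (tME q) = lebM q := by
  unfold lebM
  rw [Measure.map_map (tME q).measurable (measurable_of' q)]
  have h1 : (⇑(tME q) ∘ ⇑(Matrix.of) : (Fin q → Fin q → ℂ) → Matrix (Fin q) (Fin q) ℂ)
      = (⇑(Matrix.of) ∘ fun m : Fin q → Fin q → ℂ => fun i j => m j i) := rfl
  rw [h1, ← Measure.map_map (measurable_of' q) (mp_flip q).measurable, (mp_flip q).map_eq]

/-! ### `B_q`: closedness and transpose invariance -/

lemma conjT_transpose {m n : Type*} [Fintype m] [Fintype n] (M : Matrix m n ℂ) :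
    Mᵀᴴ = Mᴴᵀ := by
  ext i j
  simp [Matrix.conjTranspose_apply]

lemma inner_equiv_symm_aux {n : ℕ} (x y : Fin n → ℂ) :
    inner ℂ ((WithLp.equiv 2 (Fin n → ℂ)).symm x) ((WithLp.equiv 2 (Fin n → ℂ)).symm y)
      = dotProduct (star x) y := by
  rw [dotProduct_comm]; rfl

lemma psd_flip {n : ℕ} (w : Matrix (Fin n) (Fin n) ℂ)
    (h : (1 - wᴴ * w).PosSemidef) : (1 - w * wᴴ).PosSemidef := by
  have key : ∀ (A : Matrix (Fin n) (Fin n) ℂ) (z : Fin n → ℂ),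
      dotProduct (star z) ((1 - Aᴴ * A) *ᵥ z)
        = dotProduct (star z) z
          - dotProduct (star (A *ᵥ z)) (A *ᵥ z) := by
    intro A z
    rw [Matrix.sub_mulVec, dotProduct_sub, Matrix.one_mulVec]
    congr 1
    rw [← Matrix.mulVec_mulVec, dotProduct_mulVec, ← Matrix.star_mulVec]
  have hnorm : ∀ z : Fin n → ℂ, dotProduct (star z) z
      = ((‖(WithLp.equiv 2 (Fin n → ℂ)).symm z‖ ^ 2 : ℝ) : ℂ) := by
    intro z
    rw [← inner_equiv_symm_aux]
    rw [inner_self_eq_norm_sq_to_K]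
    norm_cast
  have hcontr : ∀ z : Fin n → ℂ,
      ‖(WithLp.equiv 2 (Fin n → ℂ)).symm (w *ᵥ z)‖ ≤ ‖(WithLp.equiv 2 (Fin n → ℂ)).symm z‖ := by
    intro z
    have h2 := h.dotProduct_mulVec_nonneg z
    rw [key w z, hnorm, hnorm, sub_nonneg, Complex.real_le_real] at h2
    have := Real.sqrt_le_sqrt h2
    rwa [Real.sqrt_sq (norm_nonneg _), Real.sqrt_sq (norm_nonneg _)] at this
  refine Matrix.PosSemidef.of_dotProduct_mulVec_nonneg ?_ ?_
  · exact Matrix.isHermitian_one.sub (Matrix.isHermitian_mul_conjTranspose_self w)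
  · intro z
    have key2 := key wᴴ z
    rw [Matrix.conjTranspose_conjTranspose] at key2
    rw [key2, hnorm, hnorm, sub_nonneg, Complex.real_le_real]
    have hy : ‖(WithLp.equiv 2 (Fin n → ℂ)).symm (wᴴ *ᵥ z)‖
        ≤ ‖(WithLp.equiv 2 (Fin n → ℂ)).symm z‖ := by
      set y := wᴴ *ᵥ z with hy_def
      by_cases h0 : ‖(WithLp.equiv 2 (Fin n → ℂ)).symm y‖ = 0
      · rw [h0]; exact norm_nonneg _
      · have hinner : ((‖(WithLp.equiv 2 (Fin n → ℂ)).symm y‖ ^ 2 : ℝ) : ℂ)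
            = (inner ℂ ((WithLp.equiv 2 (Fin n → ℂ)).symm (w *ᵥ y))
                ((WithLp.equiv 2 (Fin n → ℂ)).symm z) : ℂ) := by
          rw [inner_equiv_symm_aux]
          calc ((‖(WithLp.equiv 2 (Fin n → ℂ)).symm y‖ ^ 2 : ℝ) : ℂ)
              = dotProduct (star y) y := (hnorm y).symm
            _ = dotProduct (star y) (wᴴ *ᵥ z) := by rw [← hy_def]
            _ = dotProduct (star (w *ᵥ y)) z := by
                rw [dotProduct_mulVec, ← Matrix.star_mulVec]
        have hCS := norm_inner_le_norm (𝕜 := ℂ)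
          ((WithLp.equiv 2 (Fin n → ℂ)).symm (w *ᵥ y)) ((WithLp.equiv 2 (Fin n → ℂ)).symm z)
        rw [← hinner] at hCS
        rw [Complex.norm_real, Real.norm_of_nonneg (by positivity)] at hCS
        have h2 : ‖(WithLp.equiv 2 (Fin n → ℂ)).symm y‖ ^ 2
            ≤ ‖(WithLp.equiv 2 (Fin n → ℂ)).symm y‖ * ‖(WithLp.equiv 2 (Fin n → ℂ)).symm z‖ :=
          le_trans hCS (mul_le_mul_of_nonneg_right (hcontr y) (norm_nonneg _))
        have hpos : 0 < ‖(WithLp.equiv 2 (Fin n → ℂ)).symm y‖ :=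
          lt_of_le_of_ne (norm_nonneg _) (Ne.symm h0)
        nlinarith [h2, hpos]
    exact pow_le_pow_left₀ (norm_nonneg _) hy 2

lemma sub_conj_mul_transpose (q : ℕ) (w : Matrix (Fin q) (Fin q) ℂ) :
    1 - wᵀᴴ * wᵀ = (1 - w * wᴴ)ᵀ := by
  rw [Matrix.transpose_sub, Matrix.transpose_one, Matrix.transpose_mul, conjT_transpose]

lemma mem_Bq_transpose (q : ℕ) (w : Matrix (Fin q) (Fin q) ℂ) :
    wᵀ ∈ Bq q ↔ w ∈ Bq q := by
  simp only [Bq, Set.mem_setOf_eq]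
  rw [sub_conj_mul_transpose]
  constructor
  · intro h
    have h2 := h.transpose
    rw [Matrix.transpose_transpose] at h2
    have h3 := psd_flip wᴴ (by rwa [Matrix.conjTranspose_conjTranspose])
    rwa [Matrix.conjTranspose_conjTranspose] at h3
  · intro h
    exact (psd_flip w h).transpose

lemma weight_transpose (q : ℕ) (w : Matrix (Fin q) (Fin q) ℂ) :
    (1 - wᵀᴴ * wᵀ).det = (1 - wᴴ * w).det := by
  rw [sub_conj_mul_transpose, Matrix.det_transpose, Matrix.det_one_sub_mul_comm]

lemma isClosed_Bq (q : ℕ) : IsClosed (Bq q) := by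
  have hset : Bq q = ⋂ x : Fin q → ℂ,
      {w : Matrix (Fin q) (Fin q) ℂ |
        dotProduct (star x) ((1 - wᴴ * w) *ᵥ x) ∈ {z : ℂ | 0 ≤ z}} := by
    ext w
    simp only [Bq, Set.mem_setOf_eq, Set.mem_iInter]
    constructor
    · exact fun h x => h.dotProduct_mulVec_nonneg x
    · intro h
      exact Matrix.PosSemidef.of_dotProduct_mulVec_nonneg (Matrix.isHermitian_one.sub (Matrix.isHermitian_conjTranspose_mul_self w)) h
  rw [hset]
  refine isClosed_iInter fun x => ?_
  have hc : Continuous fun w : Matrix (Fin q) (Fin q) ℂ =>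
      dotProduct (star x) ((1 - wᴴ * w) *ᵥ x) :=
    continuous_const.dotProduct
      (((continuous_const.sub (continuous_id.matrix_conjTranspose.matrix_mul
        continuous_id)).matrix_mulVec continuous_const))
  have hclosed : IsClosed {z : ℂ | 0 ≤ z} := by
    have : {z : ℂ | 0 ≤ z} = Complex.re ⁻¹' Set.Ici 0 ∩ Complex.im ⁻¹' {0} := by
      ext z
      simp [Complex.le_def, eq_comm]
    rw [this]
    exact (isClosed_Ici.preimage Complex.continuous_re).inter
      (isClosed_singleton.preimage Complex.continuous_im)
  exact hclosed.preimage hc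

lemma leb_setIntegral_transpose (q : ℕ) (G : Matrix (Fin q) (Fin q) ℂ → ℂ) :
    ∫ w in Bq q, G wᵀ ∂lebM q = ∫ w in Bq q, G w ∂lebM q := by
  have hBm : MeasurableSet (Bq q) := (isClosed_Bq q).measurableSet
  have hpre : (tME q) ⁻¹' (Bq q) = Bq q := by
    ext w
    exact mem_Bq_transpose q w
  have hres : ((lebM q).restrict (Bq q)).map (tME q) = (lebM q).restrict (Bq q) := by
    calc ((lebM q).restrict (Bq q)).map (tME q)
        = ((lebM q).restrict ((tME q) ⁻¹' (Bq q))).map (tME q) := by rw [hpre]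
      _ = ((lebM q).map (tME q)).restrict (Bq q) :=
          (Measure.restrict_map (tME q).measurable hBm).symm
      _ = (lebM q).restrict (Bq q) := by rw [lebM_map_transpose]
  conv_rhs => rw [← hres]
  rw [MeasureTheory.integral_map_equiv]
  rfl

/-! ### Haar measure: uniqueness and transpose invariance -/

lemma measurable_mul2 (q : ℕ) :
    Measurable (fun p : Matrix (Fin q) (Fin q) ℂ × Matrix (Fin q) (Fin q) ℂ => p.1 * p.2) := by
  apply measurable_pi_lambda
  intro i
  apply measurable_pi_lambda
  intro j
  simp only [Matrix.mul_apply]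
  exact Finset.measurable_sum _ fun k _ =>
    ((measurable_pi_apply k).comp ((measurable_pi_apply i).comp measurable_fst)).fun_mul
      ((measurable_pi_apply j).comp ((measurable_pi_apply k).comp measurable_snd))

lemma measurable_mul_left {q : ℕ} (k : Matrix (Fin q) (Fin q) ℂ) :
    Measurable (fun x : Matrix (Fin q) (Fin q) ℂ => k * x) :=
  (measurable_mul2 q).comp (measurable_const.prodMk measurable_id)

lemma measurable_mul_right {q : ℕ} (k : Matrix (Fin q) (Fin q) ℂ) :
    Measurable (fun x : Matrix (Fin q) (Fin q) ℂ => x * k) :=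
  (measurable_mul2 q).comp (measurable_id.prodMk measurable_const)

lemma haar_unique {q : ℕ} {G : Set (Matrix (Fin q) (Fin q) ℂ)} (hG : MeasurableSet G)
    (μ lam : Measure (Matrix (Fin q) (Fin q) ℂ))
    [IsProbabilityMeasure μ] [IsProbabilityMeasure lam]
    (hμG : μ G = 1) (hlG : lam G = 1)
    (hl : ∀ k ∈ G, μ.map (fun x => k * x) = μ)
    (hr : ∀ k ∈ G, lam.map (fun x => x * k) = lam) : μ = lam := by
  have key : ∀ g : Matrix (Fin q) (Fin q) ℂ → ENNReal, Measurable g →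
      ∫⁻ z, g z ∂μ = ∫⁻ z, g z ∂lam := by
    intro g hg
    have hmul : Measurable (Function.uncurry fun u v :
        Matrix (Fin q) (Fin q) ℂ => g (u * v)) := hg.comp (measurable_mul2 q)
    have hswap := lintegral_lintegral_swap (μ := lam) (ν := μ) hmul.aemeasurable
    have haeL : ∀ᵐ u ∂lam, u ∈ G := (prob_compl_eq_zero_iff hG).mpr hlG
    have haeM : ∀ᵐ v ∂μ, v ∈ G := (prob_compl_eq_zero_iff hG).mpr hμG
    have h1 : ∫⁻ u, ∫⁻ v, g (u * v) ∂μ ∂lam = ∫⁻ z, g z ∂μ := by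
      have hae : ∀ᵐ u ∂lam, (∫⁻ v, g (u * v) ∂μ) = ∫⁻ z, g z ∂μ := by
        filter_upwards [haeL] with u hu
        conv_rhs => rw [← hl u hu]
        rw [lintegral_map hg (measurable_mul_left u)]
      rw [lintegral_congr_ae hae, lintegral_const, measure_univ, mul_one]
    have h2 : ∫⁻ v, ∫⁻ u, g (u * v) ∂lam ∂μ = ∫⁻ z, g z ∂lam := by
      have hae : ∀ᵐ v ∂μ, (∫⁻ u, g (u * v) ∂lam) = ∫⁻ z, g z ∂lam := by
        filter_upwards [haeM] with v hv
        conv_rhs => rw [← hr v hv]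
        rw [lintegral_map hg (measurable_mul_right v)]
      rw [lintegral_congr_ae hae, lintegral_const, measure_univ, mul_one]
    rw [← h1, hswap, h2]
  ext s hs
  have h := key (s.indicator 1) (measurable_one.indicator hs)
  rwa [lintegral_indicator_one hs, lintegral_indicator_one hs] at h

lemma su_transpose {q : ℕ} {A : Matrix (Fin q) (Fin q) ℂ}
    (h : A ∈ Matrix.specialUnitaryGroup (Fin q) ℂ) :
    Aᵀ ∈ Matrix.specialUnitaryGroup (Fin q) ℂ := by
  rw [Matrix.mem_specialUnitaryGroup_iff] at h ⊢
  obtain ⟨hu, hd⟩ := h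
  constructor
  · rw [Matrix.mem_unitaryGroup_iff]
    rw [Matrix.mem_unitaryGroup_iff'] at hu
    show Aᵀ * (Aᵀ)ᴴ = 1
    rw [conjT_transpose, ← Matrix.transpose_mul]
    rw [show (Aᴴ : Matrix (Fin q) (Fin q) ℂ) * A = star A * A from rfl, hu,
      Matrix.transpose_one]
  · rw [Matrix.det_transpose]; exact hd

lemma su_meas (q : ℕ) :
    MeasurableSet {A : Matrix (Fin q) (Fin q) ℂ | A ∈ Matrix.specialUnitaryGroup (Fin q) ℂ} := by
  have hset : {A : Matrix (Fin q) (Fin q) ℂ | A ∈ Matrix.specialUnitaryGroup (Fin q) ℂ}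
      = (fun A : Matrix (Fin q) (Fin q) ℂ => (A * star A, A.det)) ⁻¹'
        {((1 : Matrix (Fin q) (Fin q) ℂ), (1 : ℂ))} := by
    ext A
    simp [Matrix.mem_specialUnitaryGroup_iff, Matrix.mem_unitaryGroup_iff, Prod.ext_iff]
  rw [hset]
  have hc : Continuous fun A : Matrix (Fin q) (Fin q) ℂ => (A * star A, A.det) :=
    (continuous_id.matrix_mul continuous_id.matrix_conjTranspose).prodMk
      continuous_id.matrix_det
  exact (isClosed_singleton.preimage hc).measurableSet

lemma nu_map_transpose {q : ℕ} {ν : Measure (Matrix (Fin q) (Fin q) ℂ)}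
    (hν : IsHaarProb {A | A ∈ Matrix.specialUnitaryGroup (Fin q) ℂ} ν) :
    ν.map (tME q) = ν := by
  haveI := hν.prob
  haveI : IsProbabilityMeasure (ν.map (tME q)) :=
    Measure.isProbabilityMeasure_map (tME q).measurable.aemeasurable
  symm
  apply haar_unique (su_meas q) ν (ν.map (tME q)) hν.conc ?_ hν.invar ?_
  · rw [Measure.map_apply (tME q).measurable (su_meas q)]
    have : (tME q) ⁻¹' {A | A ∈ Matrix.specialUnitaryGroup (Fin q) ℂ}
        = {A | A ∈ Matrix.specialUnitaryGroup (Fin q) ℂ} := by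
      ext A
      constructor
      · intro h
        have h2 := su_transpose (q := q) (A := Aᵀ) h
        rwa [Matrix.transpose_transpose] at h2
      · exact fun h => su_transpose h
    rw [this]
    exact hν.conc
  · intro k hk
    rw [Measure.map_map (measurable_mul_right k) (tME q).measurable]
    have hfun : ((fun x : Matrix (Fin q) (Fin q) ℂ => x * k) ∘ ⇑(tME q))
        = ⇑(tME q) ∘ (fun x => kᵀ * x) := by
      funext m
      show mᵀ * k = (kᵀ * m)ᵀ
      rw [Matrix.transpose_mul, Matrix.transpose_transpose]
    rw [hfun, ← Measure.map_map (tME q).measurable (measurable_mul_left kᵀ),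
      hν.invar kᵀ (su_transpose hk)]

lemma nu_integral_transpose {q : ℕ} {ν : Measure (Matrix (Fin q) (Fin q) ℂ)}
    (hν : IsHaarProb {A | A ∈ Matrix.specialUnitaryGroup (Fin q) ℂ} ν)
    (F : Matrix (Fin q) (Fin q) ℂ → ℂ) :
    ∫ v, F vᵀ ∂ν = ∫ v, F v ∂ν := by
  conv_rhs => rw [← nu_map_transpose hν]
  rw [MeasureTheory.integral_map_equiv]
  rfl

/-! ### characteristic polynomials and sorted eigenvalues -/

lemma eval_charpoly {n : ℕ} (M : Matrix (Fin n) (Fin n) ℂ) (t : ℂ) :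
    M.charpoly.eval t = (Matrix.diagonal (fun _ => t) - M).det := by
  rw [Matrix.charpoly, ← Polynomial.coe_evalRingHom, RingHom.map_det]
  congr 1
  ext i j
  by_cases h : i = j
  · subst h
    simp [Matrix.charmatrix_apply_eq, Matrix.diagonal_apply_eq]
  · simp [Matrix.charmatrix_apply_ne _ _ _ h, Matrix.diagonal_apply_ne _ h]

lemma charpoly_mul_comm {n : ℕ} (P Q : Matrix (Fin n) (Fin n) ℂ) :
    (P * Q).charpoly = (Q * P).charpoly := by
  apply Polynomial.funext
  intro t
  rw [eval_charpoly, eval_charpoly]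
  by_cases ht : t = 0
  · subst ht
    rw [Matrix.diagonal_zero, zero_sub, zero_sub, Matrix.det_neg, Matrix.det_neg,
      Matrix.det_mul_comm]
  · have h1 : Matrix.diagonal (fun _ : Fin n => t) - P * Q
        = t • ((1 : Matrix (Fin n) (Fin n) ℂ) - P * (t⁻¹ • Q)) := by
      rw [smul_sub, Matrix.smul_one_eq_diagonal, mul_smul_comm, smul_smul,
        mul_inv_cancel₀ ht, one_smul]
    have h2 : Matrix.diagonal (fun _ : Fin n => t) - Q * P
        = t • ((1 : Matrix (Fin n) (Fin n) ℂ) - (t⁻¹ • Q) * P) := by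
      rw [smul_sub, Matrix.smul_one_eq_diagonal, smul_mul_assoc, smul_smul,
        mul_inv_cancel₀ ht, one_smul]
    rw [h1, h2, Matrix.det_smul, Matrix.det_smul, Matrix.det_one_sub_mul_comm]

lemma charpoly_transpose {n : ℕ} (M : Matrix (Fin n) (Fin n) ℂ) :
    Mᵀ.charpoly = M.charpoly := by
  apply Polynomial.funext
  intro t
  rw [eval_charpoly, eval_charpoly, ← Matrix.det_transpose (Matrix.diagonal _ - M),
    Matrix.transpose_sub, Matrix.diagonal_transpose]

lemma charpoly_diagonal {n : ℕ} (d : Fin n → ℂ) :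
    (Matrix.diagonal d).charpoly = ∏ i, (X - C (d i)) := by
  have h : Matrix.charmatrix (Matrix.diagonal d)
      = Matrix.diagonal (fun i => (X : ℂ[X]) - C (d i)) := by
    ext i j
    by_cases hij : i = j
    · subst hij
      rw [Matrix.charmatrix_apply_eq, Matrix.diagonal_apply_eq, Matrix.diagonal_apply_eq]
    · rw [Matrix.charmatrix_apply_ne _ _ _ hij, Matrix.diagonal_apply_ne _ hij,
        Matrix.diagonal_apply_ne _ hij, map_zero, neg_zero]
  rw [Matrix.charpoly, h, Matrix.det_diagonal]

lemma charpoly_eig {n : ℕ} {A : Matrix (Fin n) (Fin n) ℂ} (hA : A.IsHermitian) :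
    A.charpoly = ∏ i, (X - C ((hA.eigenvalues i : ℂ))) := by
  have hU := hA.spectral_theorem
  have hUU : (star (hA.eigenvectorUnitary : Matrix (Fin n) (Fin n) ℂ))
      * (hA.eigenvectorUnitary : Matrix (Fin n) (Fin n) ℂ) = 1 :=
    Matrix.mem_unitaryGroup_iff'.mp (hA.eigenvectorUnitary).2
  calc A.charpoly
      = (((hA.eigenvectorUnitary : Matrix (Fin n) (Fin n) ℂ)
          * Matrix.diagonal (RCLike.ofReal ∘ hA.eigenvalues))
          * (star (hA.eigenvectorUnitary : Matrix (Fin n) (Fin n) ℂ))).charpoly := by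
        rw [← Unitary.conjStarAlgAut_apply (S := ℂ), ← hU]
    _ = ((star (hA.eigenvectorUnitary : Matrix (Fin n) (Fin n) ℂ))
          * ((hA.eigenvectorUnitary : Matrix (Fin n) (Fin n) ℂ)
          * Matrix.diagonal (RCLike.ofReal ∘ hA.eigenvalues))).charpoly :=
        charpoly_mul_comm _ _
    _ = (Matrix.diagonal (RCLike.ofReal ∘ hA.eigenvalues)).charpoly := by
        rw [← Matrix.mul_assoc, hUU, Matrix.one_mul]
    _ = ∏ i, (X - C ((hA.eigenvalues i : ℂ))) := charpoly_diagonal _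

lemma multiset_eig {n : ℕ} {A B : Matrix (Fin n) (Fin n) ℂ}
    (hA : A.IsHermitian) (hB : B.IsHermitian) (h : A.charpoly = B.charpoly) :
    (List.ofFn hA.eigenvalues).Perm (List.ofFn hB.eigenvalues) := by
  have roots_eq : ∀ {M : Matrix (Fin n) (Fin n) ℂ} (hM : M.IsHermitian),
      M.charpoly.roots = Multiset.map (fun i => ((hM.eigenvalues i : ℝ) : ℂ))
        Finset.univ.val := by
    intro M hM
    rw [charpoly_eig hM, Finset.prod_eq_multiset_prod,
      show (fun i : Fin n => X - C ((hM.eigenvalues i : ℝ) : ℂ))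
        = (fun z : ℂ => X - C z) ∘ (fun i : Fin n => ((hM.eigenvalues i : ℝ) : ℂ)) from rfl,
      ← Multiset.map_map]
    exact Polynomial.roots_multiset_prod_X_sub_C _
  have hmul : Multiset.map (fun i => ((hA.eigenvalues i : ℝ) : ℂ)) Finset.univ.val
      = Multiset.map (fun i => ((hB.eigenvalues i : ℝ) : ℂ)) Finset.univ.val := by
    rw [← roots_eq hA, ← roots_eq hB, h]
  have hre : Multiset.map hA.eigenvalues Finset.univ.val
      = Multiset.map hB.eigenvalues Finset.univ.val := by
    apply Multiset.map_injective (f := (fun r : ℝ => (r : ℂ))) Complex.ofReal_injective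
    rw [Multiset.map_map, Multiset.map_map]
    exact hmul
  rw [← Multiset.coe_eq_coe, ← Fin.univ_val_map, ← Fin.univ_val_map]
  exact hre

lemma sorted_tuple_unique {n : ℕ} {f g : Fin n → ℝ}
    (h : (List.ofFn f).Perm (List.ofFn g)) :
    f ∘ Tuple.sort f = g ∘ Tuple.sort g := by
  apply List.ofFn_injective
  apply List.Perm.eq_of_sortedLE (Tuple.monotone_sort f).sortedLE_ofFn
    (Tuple.monotone_sort g).sortedLE_ofFn
  exact ((Equiv.Perm.ofFn_comp_perm (Tuple.sort f) f).trans h).trans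
    (Equiv.Perm.ofFn_comp_perm (Tuple.sort g) g).symm

lemma sigUp_transpose {n : ℕ} (X : Matrix (Fin n) (Fin n) ℂ) :
    sigUp Xᵀ = sigUp X := by
  have hch : (Xᵀᴴ * Xᵀ).charpoly = (Xᴴ * X).charpoly := by
    have h1 : Xᵀᴴ * Xᵀ = (X * Xᴴ)ᵀ := by
      rw [Matrix.transpose_mul, conjT_transpose]
    rw [h1, charpoly_transpose, charpoly_mul_comm]
  have h2 := sorted_tuple_unique
    (multiset_eig (Matrix.isHermitian_conjTranspose_mul_self Xᵀ)
      (Matrix.isHermitian_conjTranspose_mul_self X) hch)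
  funext j
  unfold sigUp
  rw [h2]

/-! ### symmetry of the convolution kernel -/

lemma dMr_transpose (q : ℕ) (r r' : Fin q → ℝ) (v w : Matrix (Fin q) (Fin q) ℂ) :
    (dMr q r r' v w)ᵀ = dMr q r' r vᵀ wᵀ := by
  unfold dMr sMatr cMatr
  simp only [Matrix.transpose_add, Matrix.transpose_mul, Matrix.transpose_neg,
    Matrix.diagonal_transpose, Matrix.neg_mul, Matrix.mul_neg, neg_mul, mul_neg,
    Matrix.mul_assoc, mul_assoc]

lemma convPt_swap (q : ℕ) (hq : 0 < q) (v w : Matrix (Fin q) (Fin q) ℂ)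
    (x x' : ℂ × (Fin q → ℝ)) :
    convPt q hq v w x' x = convPt q hq vᵀ wᵀ x x' := by
  unfold convPt
  have hd : dMr q x'.2 x.2 v w = (dMr q x.2 x'.2 vᵀ wᵀ)ᵀ := by
    rw [dMr_transpose, Matrix.transpose_transpose, Matrix.transpose_transpose]
  rw [hd, sigUp_transpose, Matrix.det_transpose, mul_comm (carg x'.1) (carg x.1)]

end ConvCommAux

open ConvCommAux

/-- **Commutativity of the convolution on the cone `X_q`** for real `p > 2q−1`. -/
theorem convXq_comm (q : ℕ) (hq : 0 < q) (p : ℝ) (hp : 2 * q - 1 < p)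
    (ν : Measure (Matrix (Fin q) (Fin q) ℂ))
    (hν : IsHaarProb {A | A ∈ Matrix.specialUnitaryGroup (Fin q) ℂ} ν)
    (f : ℂ × (Fin q → ℝ) → ℂ) (hf : ContinuousOn f (XqSet q))
    (x : ℂ × (Fin q → ℝ)) (hx : x ∈ XqSet q)
    (x' : ℂ × (Fin q → ℝ)) (hx' : x' ∈ XqSet q) :
    convXq q hq p ν f x x' = convXq q hq p ν f x' x := by
  symm
  unfold convXq
  congr 1
  have hfun : (fun w : Matrix (Fin q) (Fin q) ℂ =>
        (∫ v, f (convPt q hq v w x' x) ∂ν) *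
          ((((1 - wᴴ * w).det.re) ^ (p - 2 * q) : ℝ) : ℂ))
      = (fun w : Matrix (Fin q) (Fin q) ℂ =>
        (fun u : Matrix (Fin q) (Fin q) ℂ =>
          (∫ v, f (convPt q hq v u x x') ∂ν) *
            ((((1 - uᴴ * u).det.re) ^ (p - 2 * q) : ℝ) : ℂ)) wᵀ) := by
    funext w
    simp only
    rw [weight_transpose]
    congr 1
    have h1 : (fun v => f (convPt q hq v w x' x))
        = fun v : Matrix (Fin q) (Fin q) ℂ => f (convPt q hq vᵀ wᵀ x x') := by
      funext v
      rw [convPt_swap]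
    rw [h1]
    exact nu_integral_transpose hν (fun v => f (convPt q hq v wᵀ x x'))
  rw [hfun]
  exact leb_setIntegral_transpose q (fun u =>
    (∫ v, f (convPt q hq v u x x') ∂ν) * ((((1 - uᴴ * u).det.re) ^ (p - 2 * q) : ℝ) : ℂ))

end
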